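/- Let ω, ω₁, ω₂ be weight functions on ℝⁿ and q ∈ [1,+∞] such that C_q := sup_{ξ∈ℝⁿ} ‖ω(ξ)/(ω₁(ξ−·)ω₂(·))‖_{L^q(ℝⁿ)} < ∞, and let p ∈ [1,+∞] be the conjugate exponent of q (1/p + 1/q = 1). Then for all Schwartz functions f₁, f₂ on ℝⁿ one has ‖f₁ f₂‖_{FL^p_ω} ≤ (2π)^{−n} C_q ‖f₁‖_{FL^p_{ω₁}} ‖f₂‖_{FL^p_{ω₂}}. -/

import Mathlib

open MeasureTheory
open scoped ENNReal RealInnerProductSpace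

/-- The temperance condition (T). -/
def IsTemperate {n : ℕ} (ω : EuclideanSpace ℝ (Fin n) → ℝ) : Prop :=
  ∃ C N : ℝ, 0 < C ∧ 0 < N ∧ ∀ ξ η, ω ξ ≤ C * (1 + ‖ξ - η‖) ^ N * ω η

/-- A weight function: positive, measurable and temperate. -/
def IsWeight {n : ℕ} (ω : EuclideanSpace ℝ (Fin n) → ℝ) : Prop :=
  (∀ ξ, 0 < ω ξ) ∧ Measurable ω ∧ IsTemperate ω

/-- The Fourier transform `f̂(ξ) = ∫ e^{-i x·ξ} f(x) dx`. -/
noncomputable def fourierInt {n : ℕ} (f : EuclideanSpace ℝ (Fin n) → ℂ)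
    (ξ : EuclideanSpace ℝ (Fin n)) : ℂ :=
  ∫ x, Complex.exp (-Complex.I * (⟪x, ξ⟫ : ℝ)) * f x

open scoped FourierTransform
open Real (pi)

namespace FourierAux

variable {n : ℕ}

local notation "𝕍" => EuclideanSpace ℝ (Fin n)

lemma two_pi_pos : (0:ℝ) < 2 * pi := by positivity

lemma fourierInt_eq (f : 𝕍 → ℂ) (ξ : 𝕍) :
    fourierInt f ξ = 𝓕 f ((2 * pi)⁻¹ • ξ) := by
  rw [Real.fourier_eq']
  unfold fourierInt
  refine integral_congr_ae (Filter.Eventually.of_forall fun v => ?_)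
  beta_reduce
  rw [smul_eq_mul, real_inner_smul_right]
  congr 1
  have h : ∀ t : ℝ, -2 * pi * ((2 * pi)⁻¹ * t) = -t := by
    intro t
    field_simp
  rw [h]
  push_cast
  ring

lemma fourierInt_continuous (f : SchwartzMap 𝕍 ℂ) : Continuous (fourierInt ⇑f) := by
  have h : fourierInt ⇑f = fun ξ => (SchwartzMap.fourierTransformCLM ℂ f) ((2 * pi)⁻¹ • ξ) := by
    funext ξ
    rw [fourierInt_eq, SchwartzMap.fourierTransformCLM_apply, SchwartzMap.fourier_coe]
  rw [h]
  exact (SchwartzMap.fourierTransformCLM ℂ f).continuous.comp (continuous_const_smul ((2 * pi)⁻¹))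

lemma fourierInt_integrable (f : SchwartzMap 𝕍 ℂ) : Integrable (fourierInt ⇑f) volume := by
  have h : fourierInt ⇑f = fun ξ => (𝓕 ⇑f) ((2 * pi)⁻¹ • ξ) := funext fun ξ => fourierInt_eq _ _
  rw [h]
  refine (integrable_comp_smul_iff volume (𝓕 ⇑f) ?_).2 ?_
  · exact inv_ne_zero two_pi_pos.ne'
  · rw [← SchwartzMap.fourier_coe, ← SchwartzMap.fourierTransformCLM_apply ℂ f]
    exact (SchwartzMap.fourierTransformCLM ℂ f).integrable

lemma fourierInt_inversion (f : SchwartzMap 𝕍 ℂ) (x : 𝕍) :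
    ∫ η, Complex.exp (Complex.I * (⟪x, η⟫ : ℝ)) * fourierInt ⇑f η
      = (((2 * pi) ^ n : ℝ)) • f x := by
  have h2π : (2 * pi) ≠ 0 := two_pi_pos.ne'
  set F : 𝕍 → ℂ := fun w => Complex.exp (Complex.I * (2 * pi * ⟪x, w⟫ : ℝ)) * 𝓕 ⇑f w with hF
  have key : ∫ η, Complex.exp (Complex.I * (⟪x, η⟫ : ℝ)) * fourierInt ⇑f η
      = ∫ η, F ((2 * pi)⁻¹ • η) := by
    refine integral_congr_ae (Filter.Eventually.of_forall fun η => ?_)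
    beta_reduce
    rw [fourierInt_eq]
    simp only [hF]
    rw [real_inner_smul_right]
    rw [show 2 * pi * ((2 * pi)⁻¹ * ⟪x, η⟫) = ⟪x, η⟫ from by
      rw [← mul_assoc, mul_inv_cancel₀ two_pi_pos.ne', one_mul]]
  rw [key, MeasureTheory.Measure.integral_comp_smul volume F ((2 * pi)⁻¹)]
  have hfr : Module.finrank ℝ 𝕍 = n := finrank_euclideanSpace_fin
  rw [hfr]
  have habs : |(((2 * pi)⁻¹ : ℝ) ^ n)⁻¹| = (2 * pi) ^ n := by
    rw [abs_of_pos (by positivity), inv_pow, inv_inv]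
  rw [habs]
  congr 1
  have hinv : ∫ w, F w = 𝓕⁻ (𝓕 ⇑f) x := by
    rw [Real.fourierInv_eq']
    refine integral_congr_ae (Filter.Eventually.of_forall fun v => ?_)
    beta_reduce
    simp only [hF]
    rw [smul_eq_mul, real_inner_comm x v, mul_comm Complex.I]
  rw [hinv]
  rw [Continuous.fourierInv_fourier_eq f.continuous f.integrable
    (by rw [← SchwartzMap.fourier_coe, ← SchwartzMap.fourierTransformCLM_apply ℂ f]
        exact (SchwartzMap.fourierTransformCLM ℂ f).integrable)]

lemma norm_exp_neg_I_mul (t : ℝ) : ‖Complex.exp (-Complex.I * (t : ℂ))‖ = 1 := by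
  rw [Complex.norm_exp]
  simp [Complex.mul_re]

/-- The convolution identity: Fourier transform of a product. -/
lemma fourierInt_mul (f₁ f₂ : SchwartzMap 𝕍 ℂ) (ξ : 𝕍) :
    fourierInt (fun x => f₁ x * f₂ x) ξ
      = (((2 * pi) ^ n)⁻¹ : ℝ) • ∫ η, fourierInt ⇑f₁ (ξ - η) * fourierInt ⇑f₂ η := by
  have h2πn : ((2 * pi) ^ n : ℝ) ≠ 0 := by positivity
  have hf₂ : ∀ x : 𝕍, f₂ x = (((2 * pi) ^ n)⁻¹ : ℝ) •
      ∫ η, Complex.exp (Complex.I * (⟪x, η⟫ : ℝ)) * fourierInt ⇑f₂ η := by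
    intro x
    rw [fourierInt_inversion, smul_smul, inv_mul_cancel₀ h2πn, one_smul]
  have hInt : Integrable (Function.uncurry fun x η : 𝕍 =>
      Complex.exp (-Complex.I * (⟪x, ξ - η⟫ : ℝ)) * f₁ x * fourierInt ⇑f₂ η)
      (volume.prod volume) := by
    have hB : Integrable (fun z : 𝕍 × 𝕍 => f₁ z.1 * fourierInt ⇑f₂ z.2)
        (volume.prod volume) := f₁.integrable.mul_prod (fourierInt_integrable f₂)
    refine hB.norm.mono' ?_ ?_
    · apply Continuous.aestronglyMeasurable
      have hc1 : Continuous fun z : 𝕍 × 𝕍 => (⟪z.1, ξ - z.2⟫ : ℝ) :=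
        continuous_inner.comp (continuous_fst.prodMk (continuous_const.sub continuous_snd))
      exact ((Complex.continuous_exp.comp
          ((continuous_const.mul (Complex.continuous_ofReal.comp hc1)))).mul
          (f₁.continuous.comp continuous_fst)).mul
          ((fourierInt_continuous f₂).comp continuous_snd)
    · refine Filter.Eventually.of_forall fun z => ?_
      simp only [Function.uncurry, norm_mul, norm_norm]
      rw [norm_exp_neg_I_mul, one_mul]
  calc fourierInt (fun x => f₁ x * f₂ x) ξ
      = ∫ x, Complex.exp (-Complex.I * (⟪x, ξ⟫ : ℝ)) * (f₁ x * f₂ x) := rfl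
    _ = ∫ x, (((2 * pi) ^ n)⁻¹ : ℝ) •
          ∫ η, Complex.exp (-Complex.I * (⟪x, ξ - η⟫ : ℝ)) * f₁ x * fourierInt ⇑f₂ η := by
        refine integral_congr_ae (Filter.Eventually.of_forall fun x => ?_)
        beta_reduce
        rw [hf₂ x, mul_smul_comm, mul_smul_comm]
        congr 1
        rw [← mul_assoc, ← MeasureTheory.integral_const_mul]
        refine integral_congr_ae (Filter.Eventually.of_forall fun η => ?_)
        beta_reduce
        rw [inner_sub_right, Complex.ofReal_sub]
        rw [show -Complex.I * (((⟪x, ξ⟫:ℝ):ℂ) - ((⟪x, η⟫:ℝ):ℂ))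
            = -Complex.I * ((⟪x, ξ⟫:ℝ):ℂ) + Complex.I * ((⟪x, η⟫:ℝ):ℂ) from by ring]
        rw [Complex.exp_add]
        ring
    _ = (((2 * pi) ^ n)⁻¹ : ℝ) • ∫ x, ∫ η,
          Complex.exp (-Complex.I * (⟪x, ξ - η⟫ : ℝ)) * f₁ x * fourierInt ⇑f₂ η := by
        rw [integral_smul]
    _ = (((2 * pi) ^ n)⁻¹ : ℝ) • ∫ η, ∫ x,
          Complex.exp (-Complex.I * (⟪x, ξ - η⟫ : ℝ)) * f₁ x * fourierInt ⇑f₂ η := by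
        rw [MeasureTheory.integral_integral_swap hInt]
    _ = (((2 * pi) ^ n)⁻¹ : ℝ) • ∫ η, fourierInt ⇑f₁ (ξ - η) * fourierInt ⇑f₂ η := by
        congr 1
        refine integral_congr_ae (Filter.Eventually.of_forall fun η => ?_)
        beta_reduce
        exact MeasureTheory.integral_mul_const _ _

end FourierAux

open FourierAux

set_option maxHeartbeats 1000000 in
/-- If `C_q = sup_ξ ‖ω(ξ)/(ω₁(ξ-·) ω₂(·))‖_{L^q} < ∞` and `1/p + 1/q = 1`, then for all
Schwartz functions `f₁, f₂`: `‖f₁ f₂‖_{FL^p_ω} ≤ (2π)^{-n} C_q ‖f₁‖_{FL^p_{ω₁}} ‖f₂‖_{FL^p_{ω₂}}`. -/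
theorem fourierLebesgue_product_estimate {n : ℕ}
    (ω ω₁ ω₂ : EuclideanSpace ℝ (Fin n) → ℝ)
    (hω : IsWeight ω) (hω₁ : IsWeight ω₁) (hω₂ : IsWeight ω₂)
    (p q : ℝ≥0∞) (hp : 1 ≤ p) (hq : 1 ≤ q) (hpq : p⁻¹ + q⁻¹ = 1)
    (hCq : (⨆ ξ, eLpNorm (fun η => ω ξ / (ω₁ (ξ - η) * ω₂ η)) q volume) < ⊤)
    (f₁ f₂ : SchwartzMap (EuclideanSpace ℝ (Fin n)) ℂ) :
    eLpNorm (fun ξ => (ω ξ : ℂ) * fourierInt (fun x => f₁ x * f₂ x) ξ) p volume ≤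
      ENNReal.ofReal (((2 * Real.pi) ^ n)⁻¹) *
      (⨆ ξ, eLpNorm (fun η => ω ξ / (ω₁ (ξ - η) * ω₂ η)) q volume) *
      eLpNorm (fun ξ => (ω₁ ξ : ℂ) * fourierInt (fun x => f₁ x) ξ) p volume *
      eLpNorm (fun ξ => (ω₂ ξ : ℂ) * fourierInt (fun x => f₂ x) ξ) p volume := by
  obtain ⟨hω_pos, hω_meas, -⟩ := hω
  obtain ⟨hω₁_pos, hω₁_meas, -⟩ := hω₁
  obtain ⟨hω₂_pos, hω₂_meas, -⟩ := hω₂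
  set c : ℝ≥0∞ := ENNReal.ofReal (((2 * Real.pi) ^ n)⁻¹) with hc
  set C : ℝ≥0∞ := ⨆ ξ, eLpNorm (fun η => ω ξ / (ω₁ (ξ - η) * ω₂ η)) q volume with hC
  set u₁ : EuclideanSpace ℝ (Fin n) → ℂ :=
    fun ξ => (ω₁ ξ : ℂ) * fourierInt (fun x => f₁ x) ξ with hu₁
  set u₂ : EuclideanSpace ℝ (Fin n) → ℂ :=
    fun ξ => (ω₂ ξ : ℂ) * fourierInt (fun x => f₂ x) ξ with hu₂
  set u : EuclideanSpace ℝ (Fin n) → ℂ :=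
    fun ξ => (ω ξ : ℂ) * fourierInt (fun x => f₁ x * f₂ x) ξ with hu
  have hmeas_u₁ : Measurable u₁ :=
    (Complex.measurable_ofReal.comp hω₁_meas).mul (fourierInt_continuous f₁).measurable
  have hmeas_u₂ : Measurable u₂ :=
    (Complex.measurable_ofReal.comp hω₂_meas).mul (fourierInt_continuous f₂).measurable
  have hK_meas : ∀ ξ, Measurable (fun η => ω ξ / (ω₁ (ξ - η) * ω₂ η)) := fun ξ =>
    measurable_const.div ((hω₁_meas.comp (measurable_const.sub measurable_id)).mul hω₂_meas)
  -- the pointwise bound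
  have hP : ∀ ξ, (‖u ξ‖₊ : ℝ≥0∞) ≤
      c * C * eLpNorm (fun η => u₁ (ξ - η) * u₂ η) p volume := by
    intro ξ
    have hrw : u ξ = (((2 * Real.pi) ^ n)⁻¹ : ℝ) •
        ∫ η, (ω ξ / (ω₁ (ξ - η) * ω₂ η)) • (u₁ (ξ - η) * u₂ η) := by
      rw [hu]
      simp only
      rw [fourierInt_mul, mul_smul_comm, ← MeasureTheory.integral_const_mul]
      congr 1
      refine integral_congr_ae (Filter.Eventually.of_forall fun η => ?_)
      beta_reduce
      simp only [hu₁, hu₂]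
      rw [Complex.real_smul]
      have hb : ((ω₁ (ξ - η) : ℂ)) ≠ 0 := Complex.ofReal_ne_zero.2 (hω₁_pos _).ne'
      have hcn : ((ω₂ η : ℂ)) ≠ 0 := Complex.ofReal_ne_zero.2 (hω₂_pos _).ne'
      push_cast
      field_simp
    rw [hrw]
    have hnorm : (‖(((2 * Real.pi) ^ n)⁻¹ : ℝ) •
        ∫ η, (ω ξ / (ω₁ (ξ - η) * ω₂ η)) • (u₁ (ξ - η) * u₂ η)‖₊ : ℝ≥0∞)
        = c * ‖∫ η, (ω ξ / (ω₁ (ξ - η) * ω₂ η)) • (u₁ (ξ - η) * u₂ η)‖₊ := by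
      rw [nnnorm_smul, ENNReal.coe_mul, hc, ← enorm_eq_nnnorm ((((2 * Real.pi) ^ n)⁻¹ : ℝ)), Real.enorm_eq_ofReal (by positivity)]
    rw [hnorm, mul_assoc]
    refine mul_le_mul_right ?_ c
    calc (‖∫ η, (ω ξ / (ω₁ (ξ - η) * ω₂ η)) • (u₁ (ξ - η) * u₂ η)‖₊ : ℝ≥0∞)
        ≤ ∫⁻ η, ‖(ω ξ / (ω₁ (ξ - η) * ω₂ η)) • (u₁ (ξ - η) * u₂ η)‖₊ :=
          enorm_integral_le_lintegral_enorm _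
      _ = eLpNorm ((fun η => ω ξ / (ω₁ (ξ - η) * ω₂ η)) • fun η => u₁ (ξ - η) * u₂ η) 1
            volume := by rw [eLpNorm_one_eq_lintegral_enorm]; rfl
      _ ≤ eLpNorm (fun η => ω ξ / (ω₁ (ξ - η) * ω₂ η)) q volume *
            eLpNorm (fun η => u₁ (ξ - η) * u₂ η) p volume := by
          refine eLpNorm_smul_le_mul_eLpNorm ?_ ?_ (hpqr := ?_)
          · exact ((hmeas_u₁.comp (measurable_const.sub measurable_id)).mul
              hmeas_u₂).aestronglyMeasurable
          · exact (hK_meas ξ).aestronglyMeasurable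
          · simp only [ENNReal.holderTriple_iff, inv_one]
            rw [← hpq, add_comm]
      _ ≤ C * eLpNorm (fun η => u₁ (ξ - η) * u₂ η) p volume := by
          rw [hC]
          exact mul_le_mul_left
            (le_iSup (fun ξ => eLpNorm (fun η => ω ξ / (ω₁ (ξ - η) * ω₂ η)) q volume) ξ) _
  clear_value u u₁ u₂
  rcases eq_or_ne p ⊤ with hptop | hptop
  · -- case `p = ∞`, `q = 1`
    subst hptop
    have hbound : ∀ ξ, eLpNorm (fun η => u₁ (ξ - η) * u₂ η) ⊤ volume ≤
        eLpNorm u₁ ⊤ volume * eLpNorm u₂ ⊤ volume := by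
      intro ξ
      have h := eLpNorm_smul_le_eLpNorm_top_mul_eLpNorm (𝕜 := ℂ)
        (μ := (volume : Measure (EuclideanSpace ℝ (Fin n)))) ⊤
        hmeas_u₂.aestronglyMeasurable (fun η => u₁ (ξ - η))
      refine le_trans h ?_
      have heq : eLpNorm (fun η => u₁ (ξ - η)) ⊤ volume = eLpNorm u₁ ⊤ volume := by
        have hmp : MeasurePreserving (fun η : EuclideanSpace ℝ (Fin n) => ξ - η)
            volume volume := by
          have h1 : MeasurePreserving (fun η : EuclideanSpace ℝ (Fin n) => -η) volume volume :=
            Measure.measurePreserving_neg volume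
          have h2 : MeasurePreserving (fun η : EuclideanSpace ℝ (Fin n) => ξ + η) volume volume :=
            measurePreserving_add_left volume ξ
          simpa [Function.comp_def, sub_eq_add_neg] using h2.comp h1
        exact eLpNorm_comp_measurePreserving hmeas_u₁.aestronglyMeasurable hmp
      rw [heq]
    calc eLpNorm u ⊤ volume = essSup (fun ξ => (‖u ξ‖₊ : ℝ≥0∞)) volume := by
          rw [eLpNorm_exponent_top, eLpNormEssSup]
          rfl
      _ ≤ c * C * (eLpNorm u₁ ⊤ volume * eLpNorm u₂ ⊤ volume) := by
          refine essSup_le_of_ae_le _ (Filter.Eventually.of_forall fun ξ => ?_)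
          exact le_trans (hP ξ) (mul_le_mul_right (hbound ξ) _)
      _ = c * C * eLpNorm u₁ ⊤ volume * eLpNorm u₂ ⊤ volume := by ring
  · -- case `p < ∞`
    have hp0 : p ≠ 0 := (zero_lt_one.trans_le hp).ne'
    set r : ℝ := p.toReal with hr
    have hr_pos : 0 < r := ENNReal.toReal_pos hp0 hptop
    have hmeas_prod : Measurable (Function.uncurry fun ξ η : EuclideanSpace ℝ (Fin n) =>
        (‖u₁ (ξ - η)‖₊ : ℝ≥0∞) ^ r * (‖u₂ η‖₊ : ℝ≥0∞) ^ r) := by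
      refine Measurable.mul ?_ ?_
      · exact ((hmeas_u₁.comp (measurable_fst.sub measurable_snd)).enorm).pow_const r
      · exact ((hmeas_u₂.comp measurable_snd).enorm).pow_const r
    set I₁ : ℝ≥0∞ := ∫⁻ ξ, (‖u₁ ξ‖₊ : ℝ≥0∞) ^ r with hI₁def
    set I₂ : ℝ≥0∞ := ∫⁻ ξ, (‖u₂ ξ‖₊ : ℝ≥0∞) ^ r with hI₂def
    have hI₁ : ∀ η, ∫⁻ ξ, (‖u₁ (ξ - η)‖₊ : ℝ≥0∞) ^ r = I₁ := by
      intro η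
      have := lintegral_add_right_eq_self (μ := (volume : Measure (EuclideanSpace ℝ (Fin n))))
        (fun ξ => (‖u₁ ξ‖₊ : ℝ≥0∞) ^ r) (-η)
      rw [hI₁def]
      simpa [sub_eq_add_neg] using this
    have hvnorm : ∀ ξ, eLpNorm (fun η => u₁ (ξ - η) * u₂ η) p volume ^ r
        = ∫⁻ η, (‖u₁ (ξ - η)‖₊ : ℝ≥0∞) ^ r * (‖u₂ η‖₊ : ℝ≥0∞) ^ r := by
      intro ξ
      rw [eLpNorm_eq_lintegral_rpow_enorm_toReal hp0 hptop, ← hr, one_div,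
        ENNReal.rpow_inv_rpow hr_pos.ne']
      simp only [enorm_eq_nnnorm]
      refine lintegral_congr fun η => ?_
      rw [nnnorm_mul, ENNReal.coe_mul, ENNReal.mul_rpow_of_nonneg _ _ hr_pos.le]
    have hu₁norm : eLpNorm u₁ p volume = I₁ ^ (1 / r) := by
      rw [eLpNorm_eq_lintegral_rpow_enorm_toReal hp0 hptop, ← hr, hI₁def]
      rfl
    have hu₂norm : eLpNorm u₂ p volume = I₂ ^ (1 / r) := by
      rw [eLpNorm_eq_lintegral_rpow_enorm_toReal hp0 hptop, ← hr, hI₂def]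
      rfl
    calc eLpNorm u p volume
        = (∫⁻ ξ, (‖u ξ‖₊ : ℝ≥0∞) ^ r) ^ (1 / r) := by
          rw [eLpNorm_eq_lintegral_rpow_enorm_toReal hp0 hptop, ← hr]
          rfl
      _ ≤ ((c * C) ^ r * (I₁ * I₂)) ^ (1 / r) := by
          refine ENNReal.rpow_le_rpow ?_ (by positivity)
          calc ∫⁻ ξ, (‖u ξ‖₊ : ℝ≥0∞) ^ r
              ≤ ∫⁻ ξ, (c * C) ^ r *
                  ∫⁻ η, (‖u₁ (ξ - η)‖₊ : ℝ≥0∞) ^ r * (‖u₂ η‖₊ : ℝ≥0∞) ^ r := by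
                refine lintegral_mono fun ξ => ?_
                have h := ENNReal.rpow_le_rpow (hP ξ) hr_pos.le
                rwa [ENNReal.mul_rpow_of_nonneg _ _ hr_pos.le, hvnorm ξ] at h
            _ = (c * C) ^ r *
                  ∫⁻ ξ, ∫⁻ η, (‖u₁ (ξ - η)‖₊ : ℝ≥0∞) ^ r * (‖u₂ η‖₊ : ℝ≥0∞) ^ r :=
                lintegral_const_mul _ hmeas_prod.lintegral_prod_right
            _ = (c * C) ^ r * (I₁ * I₂) := by
                rw [lintegral_lintegral_swap hmeas_prod.aemeasurable]
                congr 1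
                calc ∫⁻ η, ∫⁻ ξ, (‖u₁ (ξ - η)‖₊ : ℝ≥0∞) ^ r * (‖u₂ η‖₊ : ℝ≥0∞) ^ r
                    = ∫⁻ η, I₁ * (‖u₂ η‖₊ : ℝ≥0∞) ^ r := by
                      refine lintegral_congr fun η => ?_
                      have hm : Measurable fun ξ : EuclideanSpace ℝ (Fin n) =>
                          (‖u₁ (ξ - η)‖₊ : ℝ≥0∞) ^ r :=
                        ((hmeas_u₁.comp (measurable_id.sub measurable_const)).enorm).pow_const r
                      rw [lintegral_mul_const _ hm, hI₁ η]
                  _ = I₁ * I₂ := lintegral_const_mul _ (hmeas_u₂.enorm.pow_const r)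
      _ = c * C * (I₁ ^ (1 / r) * I₂ ^ (1 / r)) := by
          rw [ENNReal.mul_rpow_of_nonneg _ _ (by positivity),
            ENNReal.mul_rpow_of_nonneg I₁ I₂ (by positivity),
            ← ENNReal.rpow_mul, mul_one_div_cancel hr_pos.ne', ENNReal.rpow_one]
      _ = c * C * eLpNorm u₁ p volume * eLpNorm u₂ p volume := by
          rw [hu₁norm, hu₂norm]
          ring
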